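/- For every d ≥ 1, every d×d complex density matrix ρ, and all Hermitian d×d complex matrices X and Y, one has I(ρ,X)·J(ρ,Y) ≥ (1/4)·|tr(ρ·[X,Y])|², where [X,Y] = XY − YX. -/

import Mathlib

open Matrix
open scoped ComplexOrder

/-- The positive semidefinite square root of a positive semidefinite matrix
(the definition `Matrix.PosSemidef.sqrt` of Mathlib, Dec 2024, since removed). -/
noncomputable def Matrix.PosSemidef.sqrt {n : Type*} [Fintype n] [DecidableEq n] {𝕜 : Type*} [RCLike 𝕜]
    {A : Matrix n n 𝕜} (hA : A.PosSemidef) : Matrix n n 𝕜 :=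
  hA.1.eigenvectorUnitary.1 * diagonal ((↑) ∘ (√·) ∘ hA.1.eigenvalues) *
  (star hA.1.eigenvectorUnitary : Matrix n n 𝕜)

/-- Variance `V(ρ,X) = tr(ρX²) − (tr(ρX))²` (as a real number). -/
noncomputable def Vq {d : ℕ} (ρ X : Matrix (Fin d) (Fin d) ℂ) : ℝ :=
  (Matrix.trace (ρ * X ^ 2)).re - ((Matrix.trace (ρ * X)).re) ^ 2

/-- The centered observable `X₀ = X − tr(ρX)·1`. -/
noncomputable def Xc {d : ℕ} (ρ X : Matrix (Fin d) (Fin d) ℂ) : Matrix (Fin d) (Fin d) ℂ :=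
  X - Matrix.trace (ρ * X) • (1 : Matrix (Fin d) (Fin d) ℂ)

/-- Wigner–Yanase skew information `I(ρ,X) = tr(ρX²) − tr(√ρ X √ρ X)`. -/
noncomputable def Iq {d : ℕ} {ρ : Matrix (Fin d) (Fin d) ℂ} (hρ : ρ.PosSemidef)
    (X : Matrix (Fin d) (Fin d) ℂ) : ℝ :=
  (Matrix.trace (ρ * X ^ 2)).re - (Matrix.trace (hρ.sqrt * X * hρ.sqrt * X)).re

/-- Classical uncertainty `C(ρ,X) = tr(√ρ X₀ √ρ X₀)`. -/
noncomputable def Cq {d : ℕ} {ρ : Matrix (Fin d) (Fin d) ℂ} (hρ : ρ.PosSemidef)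
    (X : Matrix (Fin d) (Fin d) ℂ) : ℝ :=
  (Matrix.trace (hρ.sqrt * Xc ρ X * hρ.sqrt * Xc ρ X)).re

/-- `J(ρ,X) = (1/2)·tr(({√ρ, X₀})²)`. -/
noncomputable def Jq {d : ℕ} {ρ : Matrix (Fin d) (Fin d) ℂ} (hρ : ρ.PosSemidef)
    (X : Matrix (Fin d) (Fin d) ℂ) : ℝ :=
  (1 / 2) * (Matrix.trace ((hρ.sqrt * Xc ρ X + Xc ρ X * hρ.sqrt) ^ 2)).re

/-- Quantum uncertainty `U(ρ,X) = √(I(ρ,X)·J(ρ,X))`. -/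
noncomputable def Uq {d : ℕ} {ρ : Matrix (Fin d) (Fin d) ℂ} (hρ : ρ.PosSemidef)
    (X : Matrix (Fin d) (Fin d) ℂ) : ℝ :=
  Real.sqrt (Iq hρ X * Jq hρ X)

lemma sqrt_conjTranspose_self {d : ℕ} (ρ : Matrix (Fin d) (Fin d) ℂ) (hρ : ρ.PosSemidef) :
    (hρ.sqrt)ᴴ = hρ.sqrt := by
  simp only [Matrix.PosSemidef.sqrt, conjTranspose_mul, Matrix.mul_assoc, diagonal_conjTranspose]
  congr 2
  · ext i; simp
  · simp

lemma sqrt_mul_self' {d : ℕ} (ρ : Matrix (Fin d) (Fin d) ℂ) (hρ : ρ.PosSemidef) :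
    hρ.sqrt * hρ.sqrt = ρ := by
  conv_rhs => rw [hρ.1.spectral_theorem]
  simp only [Matrix.PosSemidef.sqrt, Unitary.conjStarAlgAut_apply, Matrix.mul_assoc]
  congr 1
  rw [← Matrix.mul_assoc (star _ : Matrix _ _ ℂ), Unitary.coe_star_mul_self, Matrix.one_mul,
    ← Matrix.mul_assoc, diagonal_mul_diagonal]
  congr 2
  ext i
  simp only [Function.comp_apply]
  rw [← RCLike.ofReal_mul, Real.mul_self_sqrt (hρ.eigenvalues_nonneg i)]

lemma trace_cs {d : ℕ} (M N : Matrix (Fin d) (Fin d) ℂ) :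
    ‖Matrix.trace (Mᴴ * N)‖ ^ 2 ≤
      (Matrix.trace (Mᴴ * M)).re * (Matrix.trace (Nᴴ * N)).re := by
  let f : Matrix (Fin d) (Fin d) ℂ → EuclideanSpace ℂ (Fin d × Fin d) :=
    fun P => (WithLp.equiv 2 _).symm (fun p => P p.1 p.2)
  have key : ∀ P Q : Matrix (Fin d) (Fin d) ℂ,
      Matrix.trace (Pᴴ * Q) = @inner ℂ _ _ (f P) (f Q) := by
    intro P Q
    simp only [Matrix.trace, Matrix.diag, Matrix.mul_apply,
      Matrix.conjTranspose_apply, f, PiLp.inner_apply, RCLike.inner_apply',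
      WithLp.equiv_symm_apply, Fintype.sum_prod_type]
    rw [Finset.sum_comm]; rfl
  have h1 := norm_inner_le_norm (𝕜 := ℂ) (f M) (f N)
  have h2 : ‖Matrix.trace (Mᴴ * N)‖ ≤ ‖f M‖ * ‖f N‖ := by
    rw [key]; exact h1
  calc ‖Matrix.trace (Mᴴ * N)‖ ^ 2
      ≤ (‖f M‖ * ‖f N‖) ^ 2 := by
        apply pow_le_pow_left₀ (norm_nonneg _) h2
    _ = ‖f M‖ ^ 2 * ‖f N‖ ^ 2 := by ring
    _ = (Matrix.trace (Mᴴ * M)).re * (Matrix.trace (Nᴴ * N)).re := by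
        have hM : ((inner ℂ (f M) (f M) : ℂ)).re = ‖f M‖ ^ 2 := by
          simpa only [RCLike.re_to_complex] using inner_self_eq_norm_sq (𝕜 := ℂ) (f M)
        have hN : ((inner ℂ (f N) (f N) : ℂ)).re = ‖f N‖ ^ 2 := by
          simpa only [RCLike.re_to_complex] using inner_self_eq_norm_sq (𝕜 := ℂ) (f N)
        rw [key, key, hM, hN]


set_option maxHeartbeats 1000000 in
/-- I(ρ,X)·J(ρ,Y) ≥ (1/4)·|tr(ρ[X,Y])|². -/
theorem IJ_uncertainty (d : ℕ) (hd : 1 ≤ d) (ρ X Y : Matrix (Fin d) (Fin d) ℂ)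
    (hρ : ρ.PosSemidef) (hρtr : Matrix.trace ρ = 1)
    (hX : X.IsHermitian) (hY : Y.IsHermitian) :
    Iq hρ X * Jq hρ Y ≥
      (1 / 4) * ‖Matrix.trace (ρ * (X * Y - Y * X))‖ ^ 2 := by
  set s : Matrix (Fin d) (Fin d) ℂ := hρ.sqrt with hsdef
  have hs : sᴴ = s := sqrt_conjTranspose_self ρ hρ
  have hss : s * s = ρ := sqrt_mul_self' ρ hρ
  clear_value s
  set Z : Matrix (Fin d) (Fin d) ℂ := Xc ρ Y with hZdef
  -- trace (ρ Y) is real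
  have hc : (starRingEnd ℂ) (Matrix.trace (ρ * Y)) = Matrix.trace (ρ * Y) := by
    have := Matrix.trace_conjTranspose (ρ * Y)
    rw [Matrix.conjTranspose_mul, hY.eq, hρ.1.eq, Matrix.trace_mul_comm] at this
    exact this.symm
  have hZ : Zᴴ = Z := by
    rw [hZdef, Xc, Matrix.conjTranspose_sub, Matrix.conjTranspose_smul,
      Matrix.conjTranspose_one, hY.eq, Complex.star_def, hc]
  set A : Matrix (Fin d) (Fin d) ℂ := s * X - X * s with hAdef
  set B : Matrix (Fin d) (Fin d) ℂ := s * Z + Z * s with hBdef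
  have hAH : Aᴴ = X * s - s * X := by
    rw [hAdef, Matrix.conjTranspose_sub, Matrix.conjTranspose_mul,
      Matrix.conjTranspose_mul, hs, hX.eq]
  have hBH : Bᴴ = B := by
    rw [hBdef, Matrix.conjTranspose_add, Matrix.conjTranspose_mul,
      Matrix.conjTranspose_mul, hs, hZ, add_comm]
  -- I(ρ,X) via A
  have tI : Matrix.trace (Aᴴ * A) =
      2 * Matrix.trace (ρ * X ^ 2) - 2 * Matrix.trace (s * X * s * X) := by
    rw [hAH, hAdef]
    have e1 : Matrix.trace (X * s * (s * X)) = Matrix.trace (ρ * X ^ 2) := by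
      rw [show X * s * (s * X) = X * (ρ * X) by rw [← hss]; noncomm_ring,
        Matrix.trace_mul_comm, show ρ * X * X = ρ * X ^ 2 by rw [pow_two, mul_assoc]]
    have e2 : Matrix.trace (X * s * (X * s)) = Matrix.trace (s * X * s * X) := by
      rw [show X * s * (X * s) = X * (s * X * s) by noncomm_ring, Matrix.trace_mul_comm]
    have e3 : Matrix.trace (s * X * (s * X)) = Matrix.trace (s * X * s * X) := by
      congr 1; noncomm_ring
    have e4 : Matrix.trace (s * X * (X * s)) = Matrix.trace (ρ * X ^ 2) := by
      rw [show s * X * (X * s) = s * (X * X * s) by noncomm_ring, Matrix.trace_mul_comm,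
        show X * X * s * s = X * X * ρ by rw [← hss]; noncomm_ring,
        Matrix.trace_mul_comm, pow_two]
    simp only [Matrix.sub_mul, Matrix.mul_sub, Matrix.trace_sub]
    rw [e1, e2, e3, e4]; ring
  -- cross term
  have tC : Matrix.trace (Aᴴ * B) = Matrix.trace (ρ * (Y * X - X * Y)) := by
    rw [hAH, hBdef]
    have f1 : Matrix.trace (X * s * (s * Z)) = Matrix.trace (ρ * (Z * X)) := by
      rw [show X * s * (s * Z) = X * (ρ * Z) by rw [← hss]; noncomm_ring,
        Matrix.trace_mul_comm]
      congr 1; noncomm_ring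
    have f2 : Matrix.trace (X * s * (Z * s)) = Matrix.trace (s * X * (s * Z)) := by
      rw [show X * s * (Z * s) = (X * s * Z) * s by noncomm_ring, Matrix.trace_mul_comm]
      congr 1; noncomm_ring
    have f4 : Matrix.trace (s * X * (Z * s)) = Matrix.trace (ρ * (X * Z)) := by
      rw [show s * X * (Z * s) = s * (X * Z * s) by noncomm_ring, Matrix.trace_mul_comm,
        show X * Z * s * s = X * Z * ρ by rw [← hss]; noncomm_ring,
        Matrix.trace_mul_comm]
    simp only [Matrix.sub_mul, Matrix.mul_add, Matrix.trace_sub, Matrix.trace_add]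
    rw [f1, f2, f4]
    have hZX : Matrix.trace (ρ * (Z * X - X * Z)) = Matrix.trace (ρ * (Y * X - X * Y)) := by
      congr 2
      rw [hZdef, Xc]; noncomm_ring
    rw [← hZX, Matrix.mul_sub, Matrix.trace_sub]; ring
  -- express Iq, Jq
  have hIq : Iq hρ X = (1 / 2) * (Matrix.trace (Aᴴ * A)).re := by
    rw [tI]
    simp only [Iq, Complex.sub_re, Complex.mul_re, Complex.re_ofNat, Complex.im_ofNat, ← hsdef]
    ring
  have hJq : Jq hρ Y = (1 / 2) * (Matrix.trace (Bᴴ * B)).re := by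
    rw [hBH, Jq]
    congr 2
    rw [pow_two]
    rw [← hsdef]
  -- Cauchy–Schwarz
  have cs := trace_cs A B
  have habs : ‖Matrix.trace (ρ * (X * Y - Y * X))‖ =
      ‖Matrix.trace (Aᴴ * B)‖ := by
    rw [tC, show Y * X - X * Y = -(X * Y - Y * X) by rw [neg_sub], Matrix.mul_neg,
      Matrix.trace_neg, norm_neg]
  rw [ge_iff_le, hIq, hJq, habs]
  calc (1:ℝ) / 4 * ‖Matrix.trace (Aᴴ * B)‖ ^ 2
      ≤ 1 / 4 * ((Matrix.trace (Aᴴ * A)).re * (Matrix.trace (Bᴴ * B)).re) := by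
        linarith [cs]
    _ = 1 / 2 * (Matrix.trace (Aᴴ * A)).re * (1 / 2 * (Matrix.trace (Bᴴ * B)).re) := by
        ring
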